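/- Let 0 < ε < x, let f_n → f in D[0,∞) with the J₁ topology, where f is continuous, f(0) = x, σ_ε^f = ∞ (i.e. f(s) > ε for all s ≥ 0). Then ∫₀^{σ_ε^{f_n}} f_n⁺(s) ds → ∞ = ∫₀^{σ_ε^f} f⁺(s) ds as n → ∞. -/
import Mathlib


open Filter MeasureTheory

/-- The entrance time `σ_ε^f = inf{t ≥ 0 : f(t) ≤ ε}` of `f` into `(-∞, ε]`, valued in
`[0,∞]` (with `inf ∅ = ∞`). -/
noncomputable def entranceTime (ε : ℝ) (f : ℝ → ℝ) : ENNReal :=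
  sInf (ENNReal.ofReal '' {s : ℝ | 0 ≤ s ∧ f s ≤ ε})

/-- If `f_n → f` locally uniformly (`J₁` convergence to a continuous limit), `f` is
continuous with `f(0) = x > ε > 0` and `σ_ε^f = ∞` (i.e. `f(s) > ε` for all `s ≥ 0`),
then `∫₀^{σ_ε^{f_n}} f_n⁺(s) ds → ∞ = ∫₀^{σ_ε^f} f⁺(s) ds`. -/
theorem integral_up_to_entranceTime_tendsto_top
    (ε x : ℝ) (hε : 0 < ε) (hεx : ε < x)
    (f : ℝ → ℝ) (hf : Continuous f) (hf0 : f 0 = x)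
    (hfε : ∀ s : ℝ, 0 ≤ s → ε < f s)
    (fs : ℕ → ℝ → ℝ) (hmeas : ∀ n, Measurable (fs n))
    (hconv : ∀ T : ℝ, TendstoUniformlyOn fs f atTop (Set.Icc 0 T)) :
    Tendsto
      (fun n => ∫⁻ s in {s : ℝ | 0 ≤ s ∧ ENNReal.ofReal s < entranceTime ε (fs n)},
        ENNReal.ofReal (fs n s)) atTop (nhds ⊤) := by
  refine ENNReal.tendsto_nhds_top fun M => ?_
  -- choose T with ε * T > M
  set T : ℝ := (M + 1) / ε with hT
  have hT0 : 0 < T := div_pos (by positivity) hε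
  have hεT : (M : ℝ) < ε * T := by
    rw [hT, mul_div_cancel₀ _ hε.ne']
    linarith
  -- f attains a min on [0,T] which is > ε
  obtain ⟨m, hmmem, hmin⟩ := (isCompact_Icc (a := (0:ℝ)) (b := T)).exists_isMinOn
    (Set.nonempty_Icc.2 hT0.le) hf.continuousOn
  have hδ : ε < f m := hfε m hmmem.1
  set δ : ℝ := f m - ε with hδdef
  have hδ0 : 0 < δ := by simp [hδdef]; linarith
  -- eventually fs k > ε on [0,T]
  have hev := (Metric.tendstoUniformlyOn_iff.1 (hconv T)) δ hδ0
  filter_upwards [hev] with k hk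
  have hgt : ∀ s ∈ Set.Icc (0:ℝ) T, ε < fs k s := by
    intro s hs
    have h1 := hk s hs
    have h2 : f m ≤ f s := hmin hs
    rw [Real.dist_eq, abs_sub_lt_iff] at h1
    have := h1.1
    linarith
  -- entranceTime of fs k ≥ T
  have hent : ENNReal.ofReal T ≤ entranceTime ε (fs k) := by
    refine le_sInf ?_
    rintro _ ⟨s, ⟨hs0, hsε⟩, rfl⟩
    rcases le_or_gt s T with h | h
    · exact absurd hsε (not_le.2 (hgt s ⟨hs0, h⟩))
    · exact ENNReal.ofReal_le_ofReal h.le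
  -- the domain contains Ico 0 T
  have hsub : Set.Ico (0:ℝ) T ⊆
      {s : ℝ | 0 ≤ s ∧ ENNReal.ofReal s < entranceTime ε (fs k)} := by
    rintro s ⟨hs0, hsT⟩
    exact ⟨hs0, lt_of_lt_of_le ((ENNReal.ofReal_lt_ofReal_iff hT0).2 hsT) hent⟩
  calc (M : ENNReal) < ENNReal.ofReal (ε * T) := by
        rwa [← ENNReal.ofReal_natCast, ENNReal.ofReal_lt_ofReal_iff (by positivity)]
    _ = ∫⁻ _ in Set.Ico (0:ℝ) T, ENNReal.ofReal ε := by
        rw [setLIntegral_const, Real.volume_Ico, sub_zero,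
          ← ENNReal.ofReal_mul hε.le]
    _ ≤ ∫⁻ s in Set.Ico (0:ℝ) T, ENNReal.ofReal (fs k s) := by
        refine setLIntegral_mono ((hmeas k).ennreal_ofReal) fun s hs => ?_
        exact ENNReal.ofReal_le_ofReal (hgt s ⟨hs.1, hs.2.le⟩).le
    _ ≤ _ := lintegral_mono_set hsub
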